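/- Let q = z₁ + z₂ j and w = w₁ + w₂ j be unit quaternions with z₂ ≠ 0 and w₁ z₂ − w₂ z₁ ≠ 0. Write q w⁻¹ = z₁* + z₂* j with z₁*, z₂* ∈ ℂ. Then z₂* ≠ 0 and z₁*/z₂* = (w̄₁ λ + w̄₂)/(−w₂ λ + w₁), where λ = z₁/z₂. (Thus right multiplication by w⁻¹ induces the Möbius transformation λ ↦ (w̄₁ λ + w̄₂)/(−w₂ λ + w₁) on the base of the Hopf fibration.) -/

import Mathlib

open Quaternion
open scoped Quaternion

/-- The first complex coordinate of a quaternion `q = z₁ + z₂ j`. -/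
def z1 (q : ℍ[ℝ]) : ℂ := ⟨q.re, q.imI⟩

/-- The second complex coordinate of a quaternion `q = z₁ + z₂ j`. -/
def z2 (q : ℍ[ℝ]) : ℂ := ⟨q.imJ, q.imK⟩

/-- Let `q = z₁ + z₂ j` and `w = w₁ + w₂ j` be unit quaternions with `z₂ ≠ 0` and
`w₁ z₂ - w₂ z₁ ≠ 0`. Writing `q w⁻¹ = z₁* + z₂* j`, one has `z₂* ≠ 0` and
`z₁*/z₂* = (conj w₁ · λ + conj w₂) / (-w₂ · λ + w₁)` where `λ = z₁/z₂`: right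
multiplication by `w⁻¹` induces a Möbius transformation on the base of the Hopf
fibration. -/
theorem stmt10 (q w : ℍ[ℝ]) (hq : ‖q‖ = 1) (hw : ‖w‖ = 1)
    (hz2 : z2 q ≠ 0) (hD : z1 w * z2 q - z2 w * z1 q ≠ 0) :
    z2 (q * w⁻¹) ≠ 0 ∧
    z1 (q * w⁻¹) / z2 (q * w⁻¹) =
      ((starRingEnd ℂ) (z1 w) * (z1 q / z2 q) + (starRingEnd ℂ) (z2 w)) /
        (-(z2 w) * (z1 q / z2 q) + z1 w) := by
  have hns : normSq w = 1 := by
    have := Quaternion.normSq_eq_norm_mul_self (a := w)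
    rw [hw] at this; simpa using this
  have hinv : w⁻¹ = star w := by
    rw [Quaternion.inv_def, hns]
    simp
  have h1 : z1 (q * w⁻¹) = z1 q * (starRingEnd ℂ) (z1 w) + z2 q * (starRingEnd ℂ) (z2 w) := by
    rw [hinv]
    apply Complex.ext <;>
      simp [z1, z2, Quaternion.re_mul, Quaternion.imI_mul, Complex.ext_iff] <;> ring
  have h2 : z2 (q * w⁻¹) = z1 w * z2 q - z2 w * z1 q := by
    rw [hinv]
    apply Complex.ext <;>
      simp [z1, z2, Quaternion.imJ_mul, Quaternion.imK_mul, Complex.ext_iff] <;> ring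
  refine ⟨by rw [h2]; exact hD, ?_⟩
  have hden : -(z2 w) * (z1 q / z2 q) + z1 w ≠ 0 := by
    intro h0
    apply hD
    have : (-(z2 w) * (z1 q / z2 q) + z1 w) * z2 q = 0 := by rw [h0]; ring
    field_simp at this
    linear_combination this
  rw [h1, h2, div_eq_div_iff hD hden]
  field_simp
  ring
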